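/- arXiv:1904.02043 — 3 statements merged into one kernel-verified Lean document; each statement's English description precedes it below -/
import Mathlib

section
/- Let ℓ₁ and ℓ₂ be lines in ℝ³, each at distance exactly 1 from the origin, and suppose the distance d between ℓ₁ and ℓ₂ satisfies 0 < d < 2. Set r = d/(2 − d) and let ℓᵢ' be the image of ℓᵢ under the dilation x ↦ (1+r)·x centered at the origin. Then each ℓᵢ' is at distance 1 + r from the origin, the distance between ℓ₁' and ℓ₂' equals 2r, and consequently the open solid cylinders Cᵢ = {x ∈ ℝ³ : dist(x, ℓᵢ') < r} (i = 1,2) are disjoint from each other and from the open unit ball, while the closures of C₁ and C₂ intersect. -/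
noncomputable section

/-- Euclidean 3-space. -/
abbrev E3 := EuclideanSpace ℝ (Fin 3)

/-- The line through `p` with direction `v`. -/
def lineThrough (p v : E3) : Set E3 := {x | ∃ t : ℝ, x = p + t • v}

/-- A line in ℝ³: a one-dimensional affine subspace, i.e. a set of the form
`{p + t • v : t ∈ ℝ}` with `v ≠ 0`. -/
def IsLine (ℓ : Set E3) : Prop := ∃ p v : E3, v ≠ 0 ∧ ℓ = lineThrough p v

/-- The distance between two subsets of ℝ³: `inf {‖a - b‖ : a ∈ A, b ∈ B}`. -/
def setDist (A B : Set E3) : ℝ := sInf {d : ℝ | ∃ a ∈ A, ∃ b ∈ B, d = dist a b}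

namespace Aux

open Metric

lemma lineThrough_nonempty (p v : E3) : (lineThrough p v).Nonempty :=
  ⟨p, 0, by simp⟩

lemma self_mem_lineThrough (p v : E3) : p ∈ lineThrough p v := ⟨0, by simp⟩

lemma isClosed_lineThrough (p v : E3) : IsClosed (lineThrough p v) := by
  have h : lineThrough p v = (fun y : E3 => p + y) '' (Submodule.span ℝ {v} : Set E3) := by
    ext x
    constructor
    · rintro ⟨t, rfl⟩
      exact ⟨t • v, Submodule.smul_mem _ t (Submodule.mem_span_singleton_self v), rfl⟩
    · rintro ⟨y, hy, rfl⟩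
      obtain ⟨t, rfl⟩ := Submodule.mem_span_singleton.mp hy
      exact ⟨t, rfl⟩
  rw [h]
  exact (Homeomorph.addLeft p).isClosedMap _
    (Submodule.span ℝ {v}).closed_of_finiteDimensional

lemma distSet_nonempty {A B : Set E3} (hA : A.Nonempty) (hB : B.Nonempty) :
    {d : ℝ | ∃ a ∈ A, ∃ b ∈ B, d = dist a b}.Nonempty := by
  obtain ⟨a, ha⟩ := hA; obtain ⟨b, hb⟩ := hB
  exact ⟨dist a b, a, ha, b, hb, rfl⟩

lemma distSet_bddBelow (A B : Set E3) :
    BddBelow {d : ℝ | ∃ a ∈ A, ∃ b ∈ B, d = dist a b} := by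
  refine ⟨0, ?_⟩
  rintro x ⟨a, _, b, _, rfl⟩
  exact dist_nonneg

lemma setDist_le {A B : Set E3} {a b : E3} (ha : a ∈ A) (hb : b ∈ B) :
    setDist A B ≤ dist a b :=
  csInf_le (distSet_bddBelow A B) ⟨a, ha, b, hb, rfl⟩

lemma le_infDist' {s : Set E3} (hs : s.Nonempty) {x : E3} {b : ℝ}
    (h : ∀ y ∈ s, b ≤ dist x y) : b ≤ infDist x s := by
  by_contra hlt
  push_neg at hlt
  obtain ⟨y, hy, hxy⟩ := (infDist_lt_iff hs).mp hlt
  exact absurd (h y hy) (not_le_of_gt hxy)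

/-- Scaling a set by a positive factor scales its distance from the origin. -/
lemma infDist_smul_image (c : ℝ) (hc : 0 < c) (s : Set E3) (hs : s.Nonempty) :
    Metric.infDist 0 ((fun x : E3 => c • x) '' s) = c * Metric.infDist 0 s := by
  have hs' : ((fun x : E3 => c • x) '' s).Nonempty := hs.image _
  have hdist : ∀ y : E3, dist (0 : E3) (c • y) = c * dist 0 y := by
    intro y
    simp [norm_smul, abs_of_pos hc]
  apply le_antisymm
  · have h1 : infDist 0 ((fun x : E3 => c • x) '' s) / c ≤ infDist 0 s := by
      apply le_infDist' hs
      intro y hy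
      rw [div_le_iff₀ hc, mul_comm, ← hdist y]
      exact infDist_le_dist_of_mem ⟨y, hy, rfl⟩
    calc infDist 0 ((fun x : E3 => c • x) '' s)
        = c * (infDist 0 ((fun x : E3 => c • x) '' s) / c) := by field_simp
      _ ≤ c * infDist 0 s := by
          exact mul_le_mul_of_nonneg_left h1 hc.le
  · apply le_infDist' hs'
    rintro y ⟨z, hz, rfl⟩
    rw [hdist z]
    exact mul_le_mul_of_nonneg_left (infDist_le_dist_of_mem hz) hc.le

/-- Scaling two sets by a positive factor scales their mutual distance. -/
lemma setDist_smul_image (c : ℝ) (hc : 0 < c) (A B : Set E3)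
    (hA : A.Nonempty) (hB : B.Nonempty) :
    setDist ((fun x : E3 => c • x) '' A) ((fun x : E3 => c • x) '' B)
      = c * setDist A B := by
  have hdist : ∀ a b : E3, dist (c • a) (c • b) = c * dist a b := by
    intro a b
    rw [dist_eq_norm, dist_eq_norm, ← smul_sub, norm_smul, Real.norm_eq_abs, abs_of_pos hc]
  apply le_antisymm
  · have h1 : setDist ((fun x : E3 => c • x) '' A) ((fun x : E3 => c • x) '' B) / c
        ≤ setDist A B := by
      apply le_csInf (distSet_nonempty hA hB)
      rintro x ⟨a, ha, b, hb, rfl⟩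
      rw [div_le_iff₀ hc, mul_comm, ← hdist a b]
      exact setDist_le ⟨a, ha, rfl⟩ ⟨b, hb, rfl⟩
    calc setDist ((fun x : E3 => c • x) '' A) ((fun x : E3 => c • x) '' B)
        = c * (setDist ((fun x : E3 => c • x) '' A) ((fun x : E3 => c • x) '' B) / c) := by
          field_simp
      _ ≤ c * setDist A B := mul_le_mul_of_nonneg_left h1 hc.le
  · apply le_csInf (distSet_nonempty (hA.image _) (hB.image _))
    rintro x ⟨a', ⟨a, ha, rfl⟩, b', ⟨b, hb, rfl⟩, rfl⟩
    rw [hdist a b]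
    exact mul_le_mul_of_nonneg_left (setDist_le ha hb) hc.le

lemma image_smul_lineThrough (c : ℝ) (p v : E3) :
    (fun x : E3 => c • x) '' lineThrough p v = lineThrough (c • p) (c • v) := by
  ext x
  constructor
  · rintro ⟨y, ⟨t, rfl⟩, rfl⟩
    exact ⟨t, by show c • (p + t • v) = c • p + t • c • v; module⟩
  · rintro ⟨t, rfl⟩
    exact ⟨p + t • v, ⟨t, rfl⟩, by show c • (p + t • v) = c • p + t • c • v; module⟩

/-- The distance between two lines in `ℝ³` is attained. -/
lemma exists_setDist_eq (p₁ v₁ p₂ v₂ : E3) :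
    ∃ a ∈ lineThrough p₁ v₁, ∃ b ∈ lineThrough p₂ v₂,
      dist a b = setDist (lineThrough p₁ v₁) (lineThrough p₂ v₂) := by
  set V : Submodule ℝ E3 := Submodule.span ℝ {v₁, v₂} with hV
  set S : Set E3 := (fun y : E3 => (p₁ - p₂) + y) '' (V : Set E3) with hS
  have hScl : IsClosed S :=
    (Homeomorph.addLeft (p₁ - p₂)).isClosedMap _ V.closed_of_finiteDimensional
  have hSne : S.Nonempty := ⟨p₁ - p₂, 0, V.zero_mem, by simp⟩
  obtain ⟨y, hyS, hy⟩ := hScl.exists_infDist_eq_dist hSne 0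
  obtain ⟨u, huV, rfl⟩ := hyS
  obtain ⟨m, n, hmn⟩ := Submodule.mem_span_pair.mp huV
  refine ⟨p₁ + m • v₁, ⟨m, rfl⟩, p₂ + (-n) • v₂, ⟨-n, rfl⟩, ?_⟩
  have hddist : dist (p₁ + m • v₁) (p₂ + (-n) • v₂) = dist (0 : E3) (p₁ - p₂ + u) := by
    rw [dist_eq_norm, dist_zero_left, ← hmn]
    congr 1
    module
  have hy' : infDist 0 S = dist (0 : E3) (p₁ - p₂ + u) := by simpa using hy
  apply le_antisymm
  · calc dist (p₁ + m • v₁) (p₂ + (-n) • v₂) = dist (0 : E3) (p₁ - p₂ + u) := hddist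
      _ = infDist 0 S := hy'.symm
      _ ≤ setDist (lineThrough p₁ v₁) (lineThrough p₂ v₂) := by
          apply le_csInf
            (distSet_nonempty (lineThrough_nonempty _ _) (lineThrough_nonempty _ _))
          rintro x ⟨a, ⟨s, rfl⟩, b, ⟨t, rfl⟩, rfl⟩
          have hmem : (p₁ + s • v₁) - (p₂ + t • v₂) ∈ S := by
            refine ⟨s • v₁ - t • v₂, ?_, by module⟩
            exact Submodule.mem_span_pair.mpr ⟨s, -t, by module⟩
          calc infDist 0 S ≤ dist (0 : E3) ((p₁ + s • v₁) - (p₂ + t • v₂)) :=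
                infDist_le_dist_of_mem hmem
            _ = dist (p₁ + s • v₁) (p₂ + t • v₂) := by
                rw [dist_zero_left, dist_eq_norm]
  · exact setDist_le ⟨m, rfl⟩ ⟨-n, rfl⟩

end Aux

open Aux Metric
theorem stmt0 (ℓ₁ ℓ₂ : Set E3) (h₁ : IsLine ℓ₁) (h₂ : IsLine ℓ₂)
    (ht₁ : Metric.infDist 0 ℓ₁ = 1) (ht₂ : Metric.infDist 0 ℓ₂ = 1)
    (d : ℝ) (hd : d = setDist ℓ₁ ℓ₂) (hd0 : 0 < d) (hd2 : d < 2)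
    (r : ℝ) (hr : r = d / (2 - d))
    (ℓ₁' ℓ₂' : Set E3)
    (hl₁' : ℓ₁' = (fun x : E3 => (1 + r) • x) '' ℓ₁)
    (hl₂' : ℓ₂' = (fun x : E3 => (1 + r) • x) '' ℓ₂)
    (C₁ C₂ : Set E3)
    (hC₁ : C₁ = {x : E3 | Metric.infDist x ℓ₁' < r})
    (hC₂ : C₂ = {x : E3 | Metric.infDist x ℓ₂' < r}) :
    Metric.infDist 0 ℓ₁' = 1 + r ∧
    Metric.infDist 0 ℓ₂' = 1 + r ∧
    setDist ℓ₁' ℓ₂' = 2 * r ∧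
    Disjoint C₁ C₂ ∧
    Disjoint C₁ (Metric.ball (0 : E3) 1) ∧
    Disjoint C₂ (Metric.ball (0 : E3) 1) ∧
    (closure C₁ ∩ closure C₂).Nonempty := by
  obtain ⟨p₁, v₁, hv₁, hℓ₁⟩ := h₁
  obtain ⟨p₂, v₂, hv₂, hℓ₂⟩ := h₂
  have h2d : 0 < 2 - d := by linarith
  have hr0 : 0 < r := by rw [hr]; positivity
  have h1r : 0 < 1 + r := by linarith
  have key : (1 + r) * d = 2 * r := by
    rw [hr]; field_simp; ring
  have hne₁ : ℓ₁.Nonempty := hℓ₁ ▸ lineThrough_nonempty p₁ v₁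
  have hne₂ : ℓ₂.Nonempty := hℓ₂ ▸ lineThrough_nonempty p₂ v₂
  -- ℓᵢ' as lines
  have hline₁' : ℓ₁' = lineThrough ((1 + r) • p₁) ((1 + r) • v₁) := by
    rw [hl₁', hℓ₁, image_smul_lineThrough]
  have hline₂' : ℓ₂' = lineThrough ((1 + r) • p₂) ((1 + r) • v₂) := by
    rw [hl₂', hℓ₂, image_smul_lineThrough]
  have hne₁' : ℓ₁'.Nonempty := hline₁' ▸ lineThrough_nonempty _ _
  have hne₂' : ℓ₂'.Nonempty := hline₂' ▸ lineThrough_nonempty _ _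
  -- goal 1 & 2
  have g1 : Metric.infDist 0 ℓ₁' = 1 + r := by
    rw [hl₁', infDist_smul_image _ h1r _ hne₁, ht₁, mul_one]
  have g2 : Metric.infDist 0 ℓ₂' = 1 + r := by
    rw [hl₂', infDist_smul_image _ h1r _ hne₂, ht₂, mul_one]
  -- goal 3
  have g3 : setDist ℓ₁' ℓ₂' = 2 * r := by
    rw [hl₁', hl₂', setDist_smul_image _ h1r _ _ hne₁ hne₂, ← hd, key]
  -- goal 4
  have g4 : Disjoint C₁ C₂ := by
    rw [Set.disjoint_left]
    intro x hx1 hx2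
    rw [hC₁, Set.mem_setOf_eq] at hx1
    rw [hC₂, Set.mem_setOf_eq] at hx2
    obtain ⟨a, ha, hda⟩ :=
      (hline₁' ▸ (isClosed_lineThrough _ _)).exists_infDist_eq_dist hne₁' x
    obtain ⟨b, hb, hdb⟩ :=
      (hline₂' ▸ (isClosed_lineThrough _ _)).exists_infDist_eq_dist hne₂' x
    have h1 : setDist ℓ₁' ℓ₂' ≤ dist a b := setDist_le ha hb
    have h2 : dist a b ≤ dist a x + dist x b := dist_triangle a x b
    rw [g3] at h1
    rw [dist_comm a x] at h2
    rw [← hda] at h2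
    rw [← hdb] at h2
    linarith
  -- goals 5 & 6
  have gballs : ∀ (ℓ' : Set E3) (C : Set E3),
      Metric.infDist 0 ℓ' = 1 + r → C = {x : E3 | Metric.infDist x ℓ' < r} →
      Disjoint C (Metric.ball (0 : E3) 1) := by
    intro ℓ' C hinf hC
    rw [Set.disjoint_left]
    intro x hx hxb
    rw [hC, Set.mem_setOf_eq] at hx
    rw [Metric.mem_ball, dist_zero_right] at hxb
    have h := Metric.infDist_le_infDist_add_dist (s := ℓ') (x := (0 : E3)) (y := x)
    rw [hinf, dist_comm, dist_zero_right] at h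
    linarith
  -- goal 7
  have g7 : (closure C₁ ∩ closure C₂).Nonempty := by
    obtain ⟨a, ha, b, hb, hab⟩ := hline₁' ▸ hline₂' ▸
      exists_setDist_eq ((1 + r) • p₁) ((1 + r) • v₁) ((1 + r) • p₂) ((1 + r) • v₂)
    rw [g3] at hab
    set m : E3 := midpoint ℝ a b with hm
    have hn2 : ‖(2 : ℝ)‖⁻¹ = (2 : ℝ)⁻¹ := by norm_num
    have hma : dist m a = r := by
      rw [hm, dist_midpoint_left, hab, hn2]; ring
    have hmb : dist m b = r := by
      rw [hm, dist_midpoint_right, hab, hn2]; ring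
    have hclose : ∀ (ℓ' : Set E3) (C : Set E3) (c : E3), c ∈ ℓ' → dist m c = r →
        C = {x : E3 | Metric.infDist x ℓ' < r} → m ∈ closure C := by
      intro ℓ' C c hc hmc hC
      rw [Metric.mem_closure_iff]
      intro ε hε
      set t : ℝ := 1 - min 1 (ε / (2 * r)) with ht
      have hmin0 : 0 < min 1 (ε / (2 * r)) := by positivity
      have hmin1 : min 1 (ε / (2 * r)) ≤ 1 := min_le_left _ _
      have ht0 : 0 ≤ t := by rw [ht]; linarith
      have ht1 : t < 1 := by rw [ht]; linarith
      refine ⟨c + t • (m - c), ?_, ?_⟩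
      · rw [hC, Set.mem_setOf_eq]
        have hmc' : ‖m - c‖ = r := by rw [← dist_eq_norm]; exact hmc
        have hdc : dist (c + t • (m - c)) c = t * r := by
          have h1 : c + t • (m - c) - c = t • (m - c) := by module
          rw [dist_eq_norm, h1, norm_smul, Real.norm_eq_abs, abs_of_nonneg ht0, hmc']
        calc Metric.infDist (c + t • (m - c)) ℓ' ≤ dist (c + t • (m - c)) c :=
              Metric.infDist_le_dist_of_mem hc
          _ = t * r := hdc
          _ < 1 * r := by exact mul_lt_mul_of_pos_right ht1 hr0
          _ = r := one_mul r
      · have hmc' : ‖m - c‖ = r := by rw [← dist_eq_norm]; exact hmc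
        have hdm : dist m (c + t • (m - c)) = (1 - t) * r := by
          have h1 : m - (c + t • (m - c)) = (1 - t) • (m - c) := by module
          rw [dist_eq_norm, h1, norm_smul, Real.norm_eq_abs,
            abs_of_nonneg (by linarith : (0:ℝ) ≤ 1 - t), hmc']
        rw [hdm, ht]
        have h1 : (1 : ℝ) - (1 - min 1 (ε / (2 * r))) = min 1 (ε / (2 * r)) := by ring
        rw [h1]
        have h2 : min 1 (ε / (2 * r)) ≤ ε / (2 * r) := min_le_right _ _
        calc min 1 (ε / (2 * r)) * r ≤ ε / (2 * r) * r :=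
              mul_le_mul_of_nonneg_right h2 hr0.le
          _ = ε / 2 := by field_simp
          _ < ε := by linarith
    exact ⟨m, hclose ℓ₁' C₁ a ha hma hC₁, hclose ℓ₂' C₂ b hb hmb hC₂⟩
  exact ⟨g1, g2, g3, g4, gballs ℓ₁' C₁ g1 hC₁, gballs ℓ₂' C₂ g2 hC₂, g7⟩
end
end

section
/- For any three lines ℓ₁, ℓ₂, ℓ₃ in ℝ³, each at distance exactly 1 from the origin, the minimum of the three pairwise distances dist(ℓᵢ, ℓⱼ) (i < j) is at most √3. Moreover, this bound is attained: there exist three pairwise distinct lines, each at distance 1 from the origin, whose pairwise distances all equal √3 (for example, the three vertical lines through the points (cos(2πk/3), sin(2πk/3), 0), k = 0, 1, 2). Equivalently, via r = d/(2 − d), the maximal common radius R₃ of three pairwise nonintersecting congruent cylinders touching the unit sphere equals 3 + 2√3. -/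
noncomputable section

open Real

/-- A line tangent to the unit sphere: a line at distance exactly 1 from the origin. -/
def IsTangentLine (ℓ : Set E3) : Prop := IsLine ℓ ∧ Metric.infDist 0 ℓ = 1

/-- The minimal pairwise distance of a triple of lines. -/
def minDist3 (ℓ₁ ℓ₂ ℓ₃ : Set E3) : ℝ :=
  min (setDist ℓ₁ ℓ₂) (min (setDist ℓ₁ ℓ₃) (setDist ℓ₂ ℓ₃))

/-- The vertical line through the point `(cos (2πk/3), sin (2πk/3), 0)`. -/
def vertLine (k : Fin 3) : Set E3 :=
  lineThrough !₂[Real.cos (2 * π * k / 3), Real.sin (2 * π * k / 3), 0] !₂[0, 0, 1]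


/-! ### Auxiliary machinery -/

/-- Helper to build vectors in `E3` with the `PiLp` instances. -/
def v3 (a b c : ℝ) : E3 := !₂[a, b, c]

lemma mem_lineThrough_self (p v : E3) : p ∈ lineThrough p v := ⟨0, by simp⟩

lemma isClosed_lineThrough (p v : E3) : IsClosed (lineThrough p v) := by
  have h : lineThrough p v = (fun x => x - p) ⁻¹' (Submodule.span ℝ {v} : Set E3) := by
    ext x
    simp only [lineThrough, Set.mem_setOf_eq, Set.mem_preimage, SetLike.mem_coe,
      Submodule.mem_span_singleton]
    constructor
    · rintro ⟨t, rfl⟩; exact ⟨t, by abel⟩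
    · rintro ⟨t, ht⟩; exact ⟨t, by rw [← sub_eq_iff_eq_add'.mp ht.symm]⟩
  rw [h]
  exact (Submodule.span ℝ {v}).closed_of_finiteDimensional.preimage
    (continuous_id.sub continuous_const)

lemma norm_vert (a₁ a₂ s : ℝ) :
    ‖v3 a₁ a₂ 0 + s • v3 0 0 1‖ = Real.sqrt (a₁^2 + a₂^2 + s^2) := by
  rw [EuclideanSpace.norm_eq]
  congr 1
  simp [v3, Fin.sum_univ_three, Real.norm_eq_abs, sq_abs]

lemma dist_vert (a₁ a₂ b₁ b₂ s t : ℝ) :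
    dist (v3 a₁ a₂ 0 + s • v3 0 0 1) (v3 b₁ b₂ 0 + t • v3 0 0 1)
      = Real.sqrt ((a₁-b₁)^2 + (a₂-b₂)^2 + (s-t)^2) := by
  rw [EuclideanSpace.dist_eq]
  congr 1
  simp [v3, Fin.sum_univ_three, Real.dist_eq, sq_abs]

lemma setDist_le {A B : Set E3} {a b : E3} (ha : a ∈ A) (hb : b ∈ B) :
    setDist A B ≤ dist a b := by
  apply csInf_le
  · exact ⟨0, by rintro d ⟨x, _, y, _, rfl⟩; exact dist_nonneg⟩
  · exact ⟨a, ha, b, hb, rfl⟩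

lemma le_setDist {A B : Set E3} {c : ℝ} (hA : A.Nonempty) (hB : B.Nonempty)
    (h : ∀ a ∈ A, ∀ b ∈ B, c ≤ dist a b) : c ≤ setDist A B := by
  apply le_csInf
  · obtain ⟨a, ha⟩ := hA; obtain ⟨b, hb⟩ := hB; exact ⟨_, a, ha, b, hb, rfl⟩
  · rintro d ⟨a, ha, b, hb, rfl⟩; exact h a ha b hb

lemma exists_norm_one {ℓ : Set E3} (h : IsTangentLine ℓ) : ∃ q ∈ ℓ, ‖q‖ = 1 := by
  obtain ⟨⟨p, v, hv, rfl⟩, hd⟩ := h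
  obtain ⟨q, hq, hq'⟩ := (isClosed_lineThrough p v).exists_infDist_eq_dist
    ⟨p, mem_lineThrough_self p v⟩ 0
  exact ⟨q, hq, by rw [← dist_zero_left, ← hq', hd]⟩

lemma sphere_min {p q r : E3} (hp : ‖p‖ = 1) (hq : ‖q‖ = 1) (hr : ‖r‖ = 1) :
    min (dist p q) (min (dist p r) (dist q r)) ≤ Real.sqrt 3 := by
  by_contra hcon
  push_neg at hcon
  rw [lt_min_iff, lt_min_iff] at hcon
  obtain ⟨h1, h2, h3⟩ := hcon
  have hs : Real.sqrt 3 ^ 2 = 3 := Real.sq_sqrt (by norm_num)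
  have hs0 : (0:ℝ) ≤ Real.sqrt 3 := Real.sqrt_nonneg 3
  have sq1 : (3:ℝ) < dist p q ^ 2 := by nlinarith
  have sq2 : (3:ℝ) < dist p r ^ 2 := by nlinarith
  have sq3 : (3:ℝ) < dist q r ^ 2 := by nlinarith
  rw [dist_eq_norm] at sq1 sq2 sq3
  have e1 : ‖p - q‖^2 = ‖p‖^2 - 2*inner ℝ p q + ‖q‖^2 := norm_sub_sq_real p q
  have e2 : ‖p - r‖^2 = ‖p‖^2 - 2*inner ℝ p r + ‖r‖^2 := norm_sub_sq_real p r
  have e3 : ‖q - r‖^2 = ‖q‖^2 - 2*inner ℝ q r + ‖r‖^2 := norm_sub_sq_real q r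
  have e4 : ‖p + q + r‖^2 = ‖p+q‖^2 + 2*inner ℝ (p+q) r + ‖r‖^2 := norm_add_sq_real _ _
  have e5 : ‖p + q‖^2 = ‖p‖^2 + 2*inner ℝ p q + ‖q‖^2 := norm_add_sq_real _ _
  have e6 : inner ℝ (p+q) r = inner ℝ p r + inner ℝ q r := inner_add_left _ _ _
  have pos : (0:ℝ) ≤ ‖p + q + r‖^2 := sq_nonneg _
  nlinarith

lemma minDist3_le_sqrt3 (ℓ₁ ℓ₂ ℓ₃ : Set E3) (h1 : IsTangentLine ℓ₁)
    (h2 : IsTangentLine ℓ₂) (h3 : IsTangentLine ℓ₃) :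
    minDist3 ℓ₁ ℓ₂ ℓ₃ ≤ Real.sqrt 3 := by
  obtain ⟨q₁, m1, n1⟩ := exists_norm_one h1
  obtain ⟨q₂, m2, n2⟩ := exists_norm_one h2
  obtain ⟨q₃, m3, n3⟩ := exists_norm_one h3
  refine le_trans ?_ (sphere_min n1 n2 n3)
  exact min_le_min (setDist_le m1 m2) (min_le_min (setDist_le m1 m3) (setDist_le m2 m3))

lemma e3_ne_zero : v3 0 0 1 ≠ (0 : E3) := by
  intro h
  have h2 : v3 0 0 1 2 = (0 : E3) 2 := by rw [h]
  simp [v3] at h2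

lemma vert_tangent (a₁ a₂ : ℝ) (h : a₁^2 + a₂^2 = 1) :
    IsTangentLine (lineThrough (v3 a₁ a₂ 0) (v3 0 0 1)) := by
  constructor
  · exact ⟨_, _, e3_ne_zero, rfl⟩
  · have hne : (lineThrough (v3 a₁ a₂ 0) (v3 0 0 1)).Nonempty :=
      ⟨_, mem_lineThrough_self _ _⟩
    apply le_antisymm
    · have hm : v3 a₁ a₂ 0 + (0:ℝ) • v3 0 0 1 ∈ lineThrough (v3 a₁ a₂ 0) (v3 0 0 1) :=
        ⟨0, rfl⟩
      calc Metric.infDist 0 (lineThrough (v3 a₁ a₂ 0) (v3 0 0 1))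
          ≤ dist 0 (v3 a₁ a₂ 0 + (0:ℝ) • v3 0 0 1) := Metric.infDist_le_dist_of_mem hm
        _ = 1 := by
            rw [dist_zero_left, norm_vert]
            rw [show a₁^2 + a₂^2 + (0:ℝ)^2 = 1 by rw [← h]; ring, Real.sqrt_one]
    · rw [← not_lt, Metric.infDist_lt_iff hne]
      rintro ⟨y, ⟨t, rfl⟩, hy⟩
      rw [dist_zero_left, norm_vert] at hy
      refine absurd hy (not_lt.mpr ?_)
      rw [show (1:ℝ) = Real.sqrt 1 from Real.sqrt_one.symm]
      apply Real.sqrt_le_sqrt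
      nlinarith [sq_nonneg t]

lemma setDist_vert (a₁ a₂ b₁ b₂ : ℝ) (h : (a₁-b₁)^2 + (a₂-b₂)^2 = 3) :
    setDist (lineThrough (v3 a₁ a₂ 0) (v3 0 0 1)) (lineThrough (v3 b₁ b₂ 0) (v3 0 0 1))
      = Real.sqrt 3 := by
  apply le_antisymm
  · calc setDist _ _ ≤ dist (v3 a₁ a₂ 0 + (0:ℝ) • v3 0 0 1) (v3 b₁ b₂ 0 + (0:ℝ) • v3 0 0 1) :=
        setDist_le (A := lineThrough (v3 a₁ a₂ 0) (v3 0 0 1))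
          (B := lineThrough (v3 b₁ b₂ 0) (v3 0 0 1)) ⟨0, rfl⟩ ⟨0, rfl⟩
      _ = Real.sqrt 3 := by
        rw [dist_vert, show (a₁-b₁)^2 + (a₂-b₂)^2 + ((0:ℝ)-0)^2 = 3 by rw [← h]; ring]
  · apply le_setDist ⟨_, mem_lineThrough_self _ _⟩ ⟨_, mem_lineThrough_self _ _⟩
    rintro x ⟨s, rfl⟩ y ⟨t, rfl⟩
    rw [dist_vert]
    apply Real.sqrt_le_sqrt
    nlinarith [sq_nonneg (s - t)]

lemma ne_of_setDist {A B : Set E3} (hA : A.Nonempty) (h : setDist A B = Real.sqrt 3) :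
    A ≠ B := by
  rintro rfl
  obtain ⟨a, ha⟩ := hA
  have h1 := setDist_le ha ha
  rw [h, dist_self] at h1
  exact absurd h1 (not_le.mpr (Real.sqrt_pos.mpr (by norm_num)))

lemma vertLine0 : vertLine 0 = lineThrough (v3 1 0 0) (v3 0 0 1) := by
  have h1 : (2 * π * ((0:Fin 3):ℝ) / 3) = 0 := by norm_num
  simp only [vertLine, v3, h1, Real.cos_zero, Real.sin_zero]

lemma vertLine1 : vertLine 1 = lineThrough (v3 (-(1/2)) (Real.sqrt 3 / 2) 0) (v3 0 0 1) := by
  have h1 : (2 * π * ((1:Fin 3):ℝ) / 3) = π - π/3 := by norm_num; ring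
  simp only [vertLine, v3, h1, Real.cos_pi_sub, Real.sin_pi_sub,
    Real.cos_pi_div_three, Real.sin_pi_div_three]

lemma vertLine2 : vertLine 2 = lineThrough (v3 (-(1/2)) (-(Real.sqrt 3 / 2)) 0) (v3 0 0 1) := by
  have h1 : (2 * π * ((2:Fin 3):ℝ) / 3) = π + π/3 := by norm_num; ring
  simp only [vertLine, v3, h1, Real.cos_add, Real.sin_add, Real.cos_pi, Real.sin_pi,
    Real.cos_pi_div_three, Real.sin_pi_div_three]
  norm_num


theorem stmt1 :
    (∀ ℓ₁ ℓ₂ ℓ₃ : Set E3, IsTangentLine ℓ₁ → IsTangentLine ℓ₂ → IsTangentLine ℓ₃ →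
      minDist3 ℓ₁ ℓ₂ ℓ₃ ≤ Real.sqrt 3) ∧
    (∃ ℓ₁ ℓ₂ ℓ₃ : Set E3, IsTangentLine ℓ₁ ∧ IsTangentLine ℓ₂ ∧ IsTangentLine ℓ₃ ∧
      ℓ₁ ≠ ℓ₂ ∧ ℓ₁ ≠ ℓ₃ ∧ ℓ₂ ≠ ℓ₃ ∧
      setDist ℓ₁ ℓ₂ = Real.sqrt 3 ∧ setDist ℓ₁ ℓ₃ = Real.sqrt 3 ∧
      setDist ℓ₂ ℓ₃ = Real.sqrt 3) ∧
    ((∀ k : Fin 3, IsTangentLine (vertLine k)) ∧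
      (∀ k l : Fin 3, k ≠ l → vertLine k ≠ vertLine l ∧
        setDist (vertLine k) (vertLine l) = Real.sqrt 3)) ∧
    IsGreatest {r : ℝ | ∃ ℓ₁ ℓ₂ ℓ₃ : Set E3,
        IsTangentLine ℓ₁ ∧ IsTangentLine ℓ₂ ∧ IsTangentLine ℓ₃ ∧
        r = minDist3 ℓ₁ ℓ₂ ℓ₃ / (2 - minDist3 ℓ₁ ℓ₂ ℓ₃)}
      (3 + 2 * Real.sqrt 3) := by
  have h3 : Real.sqrt 3 ^ 2 = 3 := Real.sq_sqrt (by norm_num)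
  have h30 : (0:ℝ) ≤ Real.sqrt 3 := Real.sqrt_nonneg 3
  have hlt2 : Real.sqrt 3 < 2 := by nlinarith
  have t0 : IsTangentLine (vertLine 0) := by
    rw [vertLine0]; exact vert_tangent _ _ (by norm_num)
  have t1 : IsTangentLine (vertLine 1) := by
    rw [vertLine1]; exact vert_tangent _ _ (by nlinarith)
  have t2 : IsTangentLine (vertLine 2) := by
    rw [vertLine2]; exact vert_tangent _ _ (by nlinarith)
  have d01 : setDist (vertLine 0) (vertLine 1) = Real.sqrt 3 := by
    rw [vertLine0, vertLine1]; exact setDist_vert _ _ _ _ (by nlinarith)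
  have d10 : setDist (vertLine 1) (vertLine 0) = Real.sqrt 3 := by
    rw [vertLine0, vertLine1]; exact setDist_vert _ _ _ _ (by nlinarith)
  have d02 : setDist (vertLine 0) (vertLine 2) = Real.sqrt 3 := by
    rw [vertLine0, vertLine2]; exact setDist_vert _ _ _ _ (by nlinarith)
  have d20 : setDist (vertLine 2) (vertLine 0) = Real.sqrt 3 := by
    rw [vertLine0, vertLine2]; exact setDist_vert _ _ _ _ (by nlinarith)
  have d12 : setDist (vertLine 1) (vertLine 2) = Real.sqrt 3 := by
    rw [vertLine1, vertLine2]; exact setDist_vert _ _ _ _ (by nlinarith)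
  have d21 : setDist (vertLine 2) (vertLine 1) = Real.sqrt 3 := by
    rw [vertLine1, vertLine2]; exact setDist_vert _ _ _ _ (by nlinarith)
  have hne : ∀ k : Fin 3, (vertLine k).Nonempty := fun k =>
    ⟨_, mem_lineThrough_self _ _⟩
  have hmd : minDist3 (vertLine 0) (vertLine 1) (vertLine 2) = Real.sqrt 3 := by
    unfold minDist3
    rw [d01, d02, d12, min_self, min_self]
  refine ⟨minDist3_le_sqrt3, ?_, ⟨?_, ?_⟩, ?_, ?_⟩
  · exact ⟨vertLine 0, vertLine 1, vertLine 2, t0, t1, t2,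
      ne_of_setDist (hne 0) d01, ne_of_setDist (hne 0) d02, ne_of_setDist (hne 1) d12,
      d01, d02, d12⟩
  · intro k
    fin_cases k
    · exact t0
    · exact t1
    · exact t2
  · intro k l hkl
    fin_cases k <;> fin_cases l
    · exact absurd rfl hkl
    · exact ⟨ne_of_setDist (hne 0) d01, d01⟩
    · exact ⟨ne_of_setDist (hne 0) d02, d02⟩
    · exact ⟨ne_of_setDist (hne 1) d10, d10⟩
    · exact absurd rfl hkl
    · exact ⟨ne_of_setDist (hne 1) d12, d12⟩
    · exact ⟨ne_of_setDist (hne 2) d20, d20⟩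
    · exact ⟨ne_of_setDist (hne 2) d21, d21⟩
    · exact absurd rfl hkl
  · refine ⟨vertLine 0, vertLine 1, vertLine 2, t0, t1, t2, ?_⟩
    rw [hmd, eq_div_iff (by nlinarith)]
    nlinarith
  · rintro r ⟨ℓ₁, ℓ₂, ℓ₃, hh1, hh2, hh3, rfl⟩
    have hd := minDist3_le_sqrt3 ℓ₁ ℓ₂ ℓ₃ hh1 hh2 hh3
    have hpos : 0 < 2 - minDist3 ℓ₁ ℓ₂ ℓ₃ := by nlinarith
    rw [div_le_iff₀ hpos]
    nlinarith
end
end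

section
/- Let x = (9 − √5 − √(6(5 + √5)))/4 and r = 11 − 5√5 + √(3(85 − 38√5)). Then r = 12x³ − 62x² + 74x − 3. In particular, the field extensions ℚ(x) and ℚ(r) of ℚ inside ℝ coincide. -/
noncomputable section

theorem stmt11 (x r : ℝ)
    (hx : x = (9 - Real.sqrt 5 - Real.sqrt (6 * (5 + Real.sqrt 5))) / 4)
    (hr : r = 11 - 5 * Real.sqrt 5 + Real.sqrt (3 * (85 - 38 * Real.sqrt 5))) :
    r = 12 * x ^ 3 - 62 * x ^ 2 + 74 * x - 3 ∧
    IntermediateField.adjoin ℚ ({x} : Set ℝ) =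
      IntermediateField.adjoin ℚ ({r} : Set ℝ) := by
  set s : ℝ := Real.sqrt 5 with hs_def
  have hs0 : 0 ≤ s := Real.sqrt_nonneg 5
  have hs : s ^ 2 = 5 := Real.sq_sqrt (by norm_num)
  set t : ℝ := Real.sqrt (6 * (5 + s)) with ht_def
  have ht0 : 0 ≤ t := Real.sqrt_nonneg _
  have ht : t ^ 2 = 30 + 6 * s := by
    rw [ht_def, Real.sq_sqrt (by nlinarith)]; ring
  have hs11 : 11 ≤ 5 * s := by nlinarith
  have hu : Real.sqrt (3 * (85 - 38 * s)) = t * (5 * s - 11) / 4 := by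
    rw [show (3 : ℝ) * (85 - 38 * s) = (t * (5 * s - 11) / 4) ^ 2 by
      linear_combination (-(121:ℝ)/16 + 55/8 * s - 25/16 * s^2) * ht +
        (-(45:ℝ)/8 - 75/8 * s) * hs]
    exact Real.sqrt_sq (div_nonneg (mul_nonneg ht0 (by linarith)) (by norm_num))
  have hr' : r = 11 - 5 * s + t * (5 * s - 11) / 4 := by rw [hr, hu]
  have h1 : r = 12 * x ^ 3 - 62 * x ^ 2 + 74 * x - 3 := by
    rw [hr', hx]
    linear_combination (-(19:ℝ)/16 + 3/16 * t + 9/16 * s) * ht +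
      (35/16 + 9/16 * t + 3/16 * s) * hs
  have h2 : x = (-5 * r ^ 3 + 223 * r ^ 2 + 37 * r - 7) / 8 := by
    rw [hr', hx]
    linear_combination
      (-(3509:ℝ)/64 - 6655/512 * t - 2695/128 * s + 9075/512 * s * t
        + 425/8 * s^2 - 4125/512 * s^2 * t - 1875/128 * s^3 + 625/512 * s^3 * t) * ht +
      (27095/32 - 35075/256 * t - 12725/64 * s + 375/8 * s * t
        - 5625/64 * s^2 + 1875/256 * s^2 * t) * hs
  refine ⟨h1, le_antisymm ?_ ?_⟩
  · rw [IntermediateField.adjoin_le_iff, Set.singleton_subset_iff]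
    have hr'' : r ∈ IntermediateField.adjoin ℚ ({r} : Set ℝ) :=
      IntermediateField.subset_adjoin ℚ _ rfl
    rw [h2]
    refine div_mem (sub_mem (add_mem (add_mem ?_ ?_) ?_) ?_) ?_
    · exact mul_mem (neg_mem (ofNat_mem _ 5)) (pow_mem hr'' 3)
    · exact mul_mem (ofNat_mem _ 223) (pow_mem hr'' 2)
    · exact mul_mem (ofNat_mem _ 37) hr''
    · exact ofNat_mem _ 7
    · exact ofNat_mem _ 8
  · rw [IntermediateField.adjoin_le_iff, Set.singleton_subset_iff]
    have hx'' : x ∈ IntermediateField.adjoin ℚ ({x} : Set ℝ) :=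
      IntermediateField.subset_adjoin ℚ _ rfl
    rw [h1]
    refine sub_mem (add_mem (sub_mem ?_ ?_) ?_) ?_
    · exact mul_mem (ofNat_mem _ 12) (pow_mem hx'' 3)
    · exact mul_mem (ofNat_mem _ 62) (pow_mem hx'' 2)
    · exact mul_mem (ofNat_mem _ 74) hx''
    · exact ofNat_mem _ 3
end
end
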